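/- Let X be a real Hilbert space, B a bounded subset of X, and f : B → ℝ, G : B → X bounded functions satisfying condition (C): f(x) ≥ f(y) + ⟨G(y), x − y⟩ for all x, y ∈ B, and condition (SCW¹): for all sequences (x_n), (y_n) in B, if f(x_n) − f(y_n) − ⟨G(y_n), x_n − y_n⟩ → 0 then G(x_n) − G(y_n) → 0. For each y ∈ B define ψ_y : X → ℝ by ψ_y(x) = sup_{z∈B} { f(z) + ⟨G(z), x − z⟩ − f(y) − ⟨G(y), x − y⟩ }, and define ω₀ : (0, ∞) → [0, ∞) by ω₀(t) = sup { ψ_y(x)/‖x − y‖ : 0 < ‖x − y‖ ≤ t, x ∈ X, y ∈ B }. Then lim_{t→0⁺} ω₀(t) = 0. -/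

import Mathlib

open Set Filter

local notation "⟪" x ", " y "⟫" => @inner ℝ _ _ x y

/-- the modulus ω₀ tends to 0 at 0⁺. -/
theorem omega0_tendsto_zero
    {X : Type*} [NormedAddCommGroup X] [InnerProductSpace ℝ X] [CompleteSpace X]
    (B : Set X) (hB : Bornology.IsBounded B)
    (f : X → ℝ) (G : X → X)
    (hfbd : ∃ Mf : ℝ, ∀ z ∈ B, |f z| ≤ Mf) (hGbd : ∃ MG : ℝ, ∀ z ∈ B, ‖G z‖ ≤ MG)
    (hC : ∀ x ∈ B, ∀ y ∈ B, f x ≥ f y + ⟪G y, x - y⟫)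
    (hSCW1 : ∀ x y : ℕ → X, (∀ n, x n ∈ B) → (∀ n, y n ∈ B) →
      Tendsto (fun n => f (x n) - f (y n) - ⟪G (y n), x n - y n⟫) atTop (nhds 0) →
      Tendsto (fun n => G (x n) - G (y n)) atTop (nhds 0))
    (ψ : X → X → ℝ)
    (hψ : ∀ y ∈ B, ∀ x : X,
      ψ y x = sSup ((fun z => f z + ⟪G z, x - z⟫ - f y - ⟪G y, x - y⟫) '' B))
    (ω₀ : ℝ → ℝ)
    (hω₀ : ∀ t > (0 : ℝ),
      ω₀ t = sSup {r : ℝ | ∃ x : X, ∃ y ∈ B,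
        0 < ‖x - y‖ ∧ ‖x - y‖ ≤ t ∧ r = ψ y x / ‖x - y‖}) :
    Tendsto ω₀ (nhdsWithin 0 (Ioi 0)) (nhds 0) := by
  obtain ⟨MG, hMG⟩ := hGbd
  -- algebraic identity for the terms inside ψ
  have key : ∀ (y z x : X),
      f z + ⟪G z, x - z⟫ - f y - ⟪G y, x - y⟫
        = ⟪G z - G y, x - y⟫ - (f y - f z - ⟪G z, y - z⟫) := by
    intro y z x
    have h1 : (x - z : X) = (x - y) + (y - z) := by abel
    rw [h1, inner_add_right, inner_sub_left]
    ring
  -- pointwise bound on the terms inside ψ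
  have termle : ∀ y ∈ B, ∀ z ∈ B, ∀ x : X,
      f z + ⟪G z, x - z⟫ - f y - ⟪G y, x - y⟫ ≤ 2 * MG * ‖x - y‖ := by
    intro y hy z hz x
    have hA : f y ≥ f z + ⟪G z, y - z⟫ := hC y hy z hz
    have h2 : ⟪G z - G y, x - y⟫ ≤ ‖G z - G y‖ * ‖x - y‖ := real_inner_le_norm _ _
    have h3 : ‖G z - G y‖ ≤ 2 * MG := by
      have := norm_sub_le (G z) (G y)
      have := hMG z hz
      have := hMG y hy
      linarith
    have h4 : ‖G z - G y‖ * ‖x - y‖ ≤ 2 * MG * ‖x - y‖ :=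
      mul_le_mul_of_nonneg_right h3 (norm_nonneg _)
    rw [key]
    linarith
  -- ψ bounds
  have hψ_le : ∀ y ∈ B, ∀ x : X, ψ y x ≤ 2 * MG * ‖x - y‖ := by
    intro y hy x
    rw [hψ y hy x]
    apply csSup_le (Set.Nonempty.image _ ⟨y, hy⟩)
    rintro r ⟨z, hz, rfl⟩
    exact termle y hy z hz x
  have hψ_nonneg : ∀ y ∈ B, ∀ x : X, 0 ≤ ψ y x := by
    intro y hy x
    rw [hψ y hy x]
    have hbdd : BddAbove ((fun z => f z + ⟪G z, x - z⟫ - f y - ⟪G y, x - y⟫) '' B) := by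
      refine ⟨2 * MG * ‖x - y‖, ?_⟩
      rintro r ⟨z, hz, rfl⟩
      exact termle y hy z hz x
    have h0 : f y + ⟪G y, x - y⟫ - f y - ⟪G y, x - y⟫ ∈
        ((fun z => f z + ⟪G z, x - z⟫ - f y - ⟪G y, x - y⟫) '' B) :=
      Set.mem_image_of_mem _ hy
    calc (0:ℝ) = f y + ⟪G y, x - y⟫ - f y - ⟪G y, x - y⟫ := by ring
    _ ≤ _ := le_csSup hbdd h0
  -- main extraction lemma
  have main : ∀ ε > (0:ℝ), ∀ t > (0:ℝ), ε ≤ |ω₀ t| →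
      ∃ x y z : X, y ∈ B ∧ z ∈ B ∧ 0 < ‖x - y‖ ∧ ‖x - y‖ ≤ t ∧
        ε / 2 * ‖x - y‖ < f z + ⟪G z, x - z⟫ - f y - ⟪G y, x - y⟫ := by
    intro ε hε t ht hεt
    set S : Set ℝ := {r : ℝ | ∃ x : X, ∃ y ∈ B,
        0 < ‖x - y‖ ∧ ‖x - y‖ ≤ t ∧ r = ψ y x / ‖x - y‖} with hS
    have hωt : ω₀ t = sSup S := hω₀ t ht
    have hSne : S.Nonempty := by
      by_contra hne
      rw [Set.not_nonempty_iff_eq_empty] at hne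
      rw [hωt, hne, Real.sSup_empty] at hεt
      simp at hεt; linarith
    have hSbdd : BddAbove S := by
      refine ⟨2 * MG, ?_⟩
      rintro r ⟨x, y, hy, hd, hdt, rfl⟩
      rw [div_le_iff₀ hd]
      exact hψ_le y hy x
    have hSnn : ∀ r ∈ S, 0 ≤ r := by
      rintro r ⟨x, y, hy, hd, hdt, rfl⟩
      exact div_nonneg (hψ_nonneg y hy x) hd.le
    have hω_nn : 0 ≤ ω₀ t := by
      obtain ⟨r, hr⟩ := hSne
      calc (0:ℝ) ≤ r := hSnn r hr
      _ ≤ sSup S := le_csSup hSbdd hr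
      _ = ω₀ t := hωt.symm
    have hεω : ε ≤ ω₀ t := by rwa [abs_of_nonneg hω_nn] at hεt
    have hlt : ε / 2 < sSup S := by rw [← hωt]; linarith
    obtain ⟨r, hrS, hrgt⟩ := exists_lt_of_lt_csSup hSne hlt
    obtain ⟨x, y, hy, hd, hdt, rfl⟩ := hrS
    have hψgt : ε / 2 * ‖x - y‖ < ψ y x := by
      rw [← lt_div_iff₀ hd] at *
      linarith [hrgt]
    rw [hψ y hy x] at hψgt
    obtain ⟨r', hr'S, hr'gt⟩ :=
      exists_lt_of_lt_csSup (Set.Nonempty.image _ ⟨y, hy⟩) hψgt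
    obtain ⟨z, hz, rfl⟩ := hr'S
    exact ⟨x, y, z, hy, hz, hd, hdt, hr'gt⟩
  -- contradiction argument
  by_contra hcon
  rw [Metric.tendsto_nhdsWithin_nhds] at hcon
  push_neg at hcon
  obtain ⟨ε, hε, hεfun⟩ := hcon
  have H : ∀ n : ℕ, ∃ t : ℝ, t ∈ Ioi (0:ℝ) ∧ dist t 0 < 1 / (n + 1) ∧ ε ≤ dist (ω₀ t) 0 := by
    intro n
    obtain ⟨t, ht, h1, h2⟩ := hεfun (1 / (n + 1)) (by positivity)
    exact ⟨t, ht, h1, h2⟩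
  choose t ht1 ht2 ht3 using H
  have ht1' : ∀ n, 0 < t n := fun n => ht1 n
  have ht2' : ∀ n, t n < 1 / (n + 1) := by
    intro n
    have := ht2 n
    rw [Real.dist_eq, sub_zero, abs_of_pos (ht1' n)] at this
    exact this
  have ht3' : ∀ n, ε ≤ |ω₀ (t n)| := by
    intro n
    have := ht3 n
    rwa [Real.dist_eq, sub_zero] at this
  have H2 : ∀ n : ℕ, ∃ x y z : X, y ∈ B ∧ z ∈ B ∧ 0 < ‖x - y‖ ∧ ‖x - y‖ ≤ t n ∧
      ε / 2 * ‖x - y‖ < f z + ⟪G z, x - z⟫ - f y - ⟪G y, x - y⟫ :=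
    fun n => main ε hε (t n) (ht1' n) (ht3' n)
  choose x y z hy hz hd hdt hterm using H2
  set A : ℕ → ℝ := fun n => f (y n) - f (z n) - ⟪G (z n), y n - z n⟫ with hA
  have hA0 : ∀ n, 0 ≤ A n := by
    intro n
    have := hC (y n) (hy n) (z n) (hz n)
    simp only [hA]
    linarith
  have hinner : ∀ n, ε / 2 * ‖x n - y n‖ + A n < ⟪G (z n) - G (y n), x n - y n⟫ := by
    intro n
    have hk := key (y n) (z n) (x n)
    have := hterm n
    simp only [hA]
    linarith [hterm n, hk]
  have hip : ∀ n, ⟪G (z n) - G (y n), x n - y n⟫ ≤ ‖G (z n) - G (y n)‖ * ‖x n - y n‖ :=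
    fun n => real_inner_le_norm _ _
  have hNle : ∀ n, ‖G (z n) - G (y n)‖ ≤ 2 * MG := by
    intro n
    have := norm_sub_le (G (z n)) (G (y n))
    have := hMG (z n) (hz n)
    have := hMG (y n) (hy n)
    linarith
  have hMG0 : 0 ≤ MG := le_trans (norm_nonneg _) (hMG (z 0) (hz 0))
  have hnormbig : ∀ n, ε / 2 < ‖G (z n) - G (y n)‖ := by
    intro n
    have h1 := hinner n
    have h2 := hip n
    have h3 := hA0 n
    have h4 := hd n
    have h12 := h1.trans_le h2
    have h5 : ε / 2 * ‖x n - y n‖ < ‖G (z n) - G (y n)‖ * ‖x n - y n‖ :=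
      lt_of_le_of_lt (le_add_of_nonneg_right h3) h12
    exact lt_of_mul_lt_mul_right h5 h4.le
  have hAle : ∀ n : ℕ, A n ≤ 2 * MG * (1 / (n + 1)) := by
    intro n
    have h1 := hinner n
    have h2 := hip n
    have h4 := hd n
    have h5 : ‖G (z n) - G (y n)‖ * ‖x n - y n‖ ≤ 2 * MG * ‖x n - y n‖ :=
      mul_le_mul_of_nonneg_right (hNle n) (norm_nonneg _)
    have h6 : ‖x n - y n‖ ≤ 1 / (n + 1) := le_of_lt (lt_of_le_of_lt (hdt n) (ht2' n))
    have h7 : 2 * MG * ‖x n - y n‖ ≤ 2 * MG * (1 / (n + 1)) :=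
      mul_le_mul_of_nonneg_left h6 (by linarith)
    nlinarith [mul_pos (half_pos hε) h4]
  have hAtend : Tendsto A atTop (nhds 0) := by
    have hbound : Tendsto (fun n : ℕ => 2 * MG * (1 / (n + 1))) atTop (nhds 0) := by
      have := tendsto_one_div_add_atTop_nhds_zero_nat (𝕜 := ℝ)
      simpa using this.const_mul (2 * MG)
    exact squeeze_zero hA0 hAle hbound
  have hGtend := hSCW1 y z hy hz hAtend
  have hGnorm : Tendsto (fun n => ‖G (y n) - G (z n)‖) atTop (nhds 0) := by
    rw [← tendsto_zero_iff_norm_tendsto_zero]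
    exact hGtend
  have hev : ∀ᶠ n in atTop, ‖G (y n) - G (z n)‖ < ε / 2 :=
    (hGnorm.eventually (gt_mem_nhds (half_pos hε)))
  obtain ⟨n, hn⟩ := hev.exists
  have := hnormbig n
  rw [norm_sub_rev] at hn
  linarith
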